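/- Intersection via tagging: let Z1, P1, Z2, P2 ⊆ Q[X] be finite and t a fresh variable. Then (ideal(Z1)+cone(P1)) ∩ (ideal(Z2)+cone(P2)) = (ideal(t·Z1 ∪ (1−t)·Z2) + cone(t·P1 ∪ (1−t)·P2)) ∩ Q[X], where ideals and cones on the right are taken in Q[X ∪ {t}]. -/
import Mathlib

open MvPolynomial Pointwise

/-- `cone(P)`: the set of finite nonnegative rational combinations of elements of `P`. -/
def coneGen {σ : Type} (P : Set (MvPolynomial σ ℚ)) : Set (MvPolynomial σ ℚ) :=
  {q | ∃ (s : Finset (MvPolynomial σ ℚ)) (c : MvPolynomial σ ℚ → ℚ),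
      (↑s : Set (MvPolynomial σ ℚ)) ⊆ P ∧ (∀ p ∈ s, 0 ≤ c p) ∧ q = ∑ p ∈ s, c p • p}

/-- Tagging: multiply each member of a set `S ⊆ ℚ[X]`, viewed inside
`ℚ[X ∪ {t}] = MvPolynomial (Option σ) ℚ` (with `t = X none`), by the polynomial `f`. -/
def tag {σ : Type} (f : MvPolynomial (Option σ) ℚ) (S : Set (MvPolynomial σ ℚ)) :
    Set (MvPolynomial (Option σ) ℚ) :=
  (fun s => f * rename (some : σ → Option σ) s) '' S

section lemmas
variable {σ τ : Type} {P S : Set (MvPolynomial σ ℚ)} {p a b q : MvPolynomial σ ℚ}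

lemma zero_mem_coneGen : (0 : MvPolynomial σ ℚ) ∈ coneGen P :=
  ⟨∅, fun _ => 0, by simp, by simp, by simp⟩

lemma mem_coneGen_of_mem (hp : p ∈ P) : p ∈ coneGen P :=
  ⟨{p}, fun _ => 1, by simpa using hp, by simp, by simp⟩

lemma add_mem_coneGen (ha : a ∈ coneGen P) (hb : b ∈ coneGen P) : a + b ∈ coneGen P := by
  classical
  obtain ⟨s, c, hs, hc, rfl⟩ := ha
  obtain ⟨u, d, hu, hd, rfl⟩ := hb
  refine ⟨s ∪ u, fun p => (if p ∈ s then c p else 0) + (if p ∈ u then d p else 0), ?_, ?_, ?_⟩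
  · intro x hx
    rcases Finset.mem_union.1 (by exact_mod_cast hx) with h | h
    · exact hs h
    · exact hu h
  · intro p _
    have h1 : (0:ℚ) ≤ if p ∈ s then c p else 0 := by
      split_ifs with h
      · exact hc _ h
      · exact le_rfl
    have h2 : (0:ℚ) ≤ if p ∈ u then d p else 0 := by
      split_ifs with h
      · exact hd _ h
      · exact le_rfl
    positivity
  · have key : ∀ (v : Finset (MvPolynomial σ ℚ)) (e : MvPolynomial σ ℚ → ℚ),
        v ⊆ s ∪ u → (∑ p ∈ s ∪ u, (if p ∈ v then e p else 0) • p) = ∑ p ∈ v, e p • p := by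
      intro v e hv
      rw [← Finset.sum_filter_of_ne (p := fun p => p ∈ v)]
      · rw [Finset.filter_mem_eq_inter, Finset.inter_eq_right.2 hv]
        exact Finset.sum_congr rfl fun x hx => by simp [hx]
      · intro x _ hne
        by_contra h
        simp [h] at hne
    simp only [add_smul, Finset.sum_add_distrib]
    rw [key s c Finset.subset_union_left, key u d Finset.subset_union_right]

lemma smul_mem_coneGen {c : ℚ} (hc : 0 ≤ c) (hq : q ∈ coneGen P) : c • q ∈ coneGen P := by
  obtain ⟨s, d, hs, hd, rfl⟩ := hq
  refine ⟨s, fun p => c * d p, hs, fun p hp => mul_nonneg hc (hd p hp), ?_⟩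
  rw [Finset.smul_sum]
  exact Finset.sum_congr rfl fun x _ => (smul_smul c (d x) x).symm ▸ rfl

lemma coneGen_map {P : Set (MvPolynomial τ ℚ)}
    (L : MvPolynomial σ ℚ →ₗ[ℚ] MvPolynomial τ ℚ)
    (h : ∀ x ∈ S, L x ∈ coneGen P) (hq : q ∈ coneGen S) : L q ∈ coneGen P := by
  obtain ⟨s, c, hs, hc, rfl⟩ := hq
  rw [map_sum]
  refine Finset.sum_induction _ (· ∈ coneGen P) (fun _ _ => add_mem_coneGen)
    zero_mem_coneGen (fun x hx => ?_)
  rw [map_smul]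
  exact smul_mem_coneGen (hc x hx) (h x (hs hx))

/-- multiplication-by-f ∘ rename as linear map -/
noncomputable def tagMap (f : MvPolynomial (Option σ) ℚ) :
    MvPolynomial σ ℚ →ₗ[ℚ] MvPolynomial (Option σ) ℚ :=
  (LinearMap.mulLeft ℚ f).comp (rename (some : σ → Option σ)).toLinearMap

@[simp] lemma tagMap_apply (f : MvPolynomial (Option σ) ℚ) (p : MvPolynomial σ ℚ) :
    tagMap f p = f * rename some p := rfl

lemma tag_ideal_mem (f : MvPolynomial (Option σ) ℚ) {Z : Set (MvPolynomial σ ℚ)}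
    {z : MvPolynomial σ ℚ} (hz : z ∈ Ideal.span Z) :
    f * rename (some : σ → Option σ) z ∈ Ideal.span (tag f Z) := by
  refine Submodule.span_induction (p := fun z _ => f * rename (some : σ → Option σ) z ∈
    Ideal.span (tag f Z)) ?_ ?_ ?_ ?_ hz
  · intro x hx
    exact Ideal.subset_span ⟨x, hx, rfl⟩
  · simp
  · intro x y _ _ hx hy
    rw [map_add, mul_add]; exact Ideal.add_mem _ hx hy
  · intro r x _ hx
    have h : f * rename (some : σ → Option σ) (r • x) =
        (rename (some : σ → Option σ) r) * (f * rename some x) := by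
      rw [smul_eq_mul, map_mul]; ring
    rw [h]
    exact Ideal.mul_mem_left _ _ hx

/-- untagging via an evaluation with φ f = 1, φ g = 0 -/
lemma untag {Z1 P1 Z2 P2 : Set (MvPolynomial σ ℚ)}
    (φ : MvPolynomial (Option σ) ℚ →ₐ[ℚ] MvPolynomial σ ℚ)
    (hr : ∀ x : MvPolynomial σ ℚ, φ (rename some x) = x)
    (f g : MvPolynomial (Option σ) ℚ) (hf : φ f = 1) (hg : φ g = 0)
    {z p : MvPolynomial (Option σ) ℚ}
    (hz : z ∈ Ideal.span (tag f Z1 ∪ tag g Z2))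
    (hp : p ∈ coneGen (tag f P1 ∪ tag g P2)) :
    φ (z + p) ∈ (↑(Ideal.span Z1) : Set (MvPolynomial σ ℚ)) + coneGen P1 := by
  refine Set.mem_add.2 ⟨φ z, ?_, φ p, ?_, (map_add φ z p).symm⟩
  · have h1 : φ z ∈ Ideal.map φ (Ideal.span (tag f Z1 ∪ tag g Z2)) :=
      Ideal.mem_map_of_mem _ hz
    rw [Ideal.map_span] at h1
    refine Ideal.span_le.2 ?_ h1
    rintro x ⟨y, hy, rfl⟩
    rcases hy with ⟨w, hw, rfl⟩ | ⟨w, hw, rfl⟩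
    · simp only [map_mul, hf, hr, one_mul]
      exact Ideal.subset_span hw
    · simp only [map_mul, hg, zero_mul]
      exact Ideal.zero_mem _
  · refine coneGen_map φ.toLinearMap (fun x hx => ?_) hp
    rcases hx with ⟨w, hw, rfl⟩ | ⟨w, hw, rfl⟩
    · simp only [AlgHom.toLinearMap_apply, map_mul, hf, hr, one_mul]
      exact mem_coneGen_of_mem hw
    · simp only [AlgHom.toLinearMap_apply, map_mul, hg, zero_mul]
      exact zero_mem_coneGen
end lemmas

/-- intersection via tagging: let `Z1, P1, Z2, P2 ⊆ ℚ[X]` be finite and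
`t` a fresh variable.  Then
`(ideal(Z1)+cone(P1)) ∩ (ideal(Z2)+cone(P2))
  = (ideal(t·Z1 ∪ (1−t)·Z2) + cone(t·P1 ∪ (1−t)·P2)) ∩ ℚ[X]`,
where the ideals and cones on the right are taken in `ℚ[X ∪ {t}]`. -/
theorem intersection_via_tagging {σ : Type}
    (Z1 P1 Z2 P2 : Set (MvPolynomial σ ℚ))
    (hZ1 : Z1.Finite) (hP1 : P1.Finite) (hZ2 : Z2.Finite) (hP2 : P2.Finite) :
    ((↑(Ideal.span Z1) : Set (MvPolynomial σ ℚ)) + coneGen P1) ∩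
        ((↑(Ideal.span Z2) : Set (MvPolynomial σ ℚ)) + coneGen P2) =
      {q : MvPolynomial σ ℚ |
        rename (some : σ → Option σ) q ∈
          (↑(Ideal.span
              (tag (MvPolynomial.X (none : Option σ)) Z1 ∪
               tag (1 - MvPolynomial.X (none : Option σ)) Z2)) :
                Set (MvPolynomial (Option σ) ℚ)) +
            coneGen
              (tag (MvPolynomial.X (none : Option σ)) P1 ∪
               tag (1 - MvPolynomial.X (none : Option σ)) P2)} := by
  set t : MvPolynomial (Option σ) ℚ := MvPolynomial.X (none : Option σ) with ht
  ext q
  simp only [Set.mem_inter_iff, Set.mem_add, SetLike.mem_coe, Set.mem_setOf_eq]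
  constructor
  · rintro ⟨⟨z1, hz1, p1, hp1, rfl⟩, z2, hz2, p2, hp2, hsum⟩
    refine ⟨t * rename some z1 + (1-t) * rename some z2, ?_,
            t * rename some p1 + (1-t) * rename some p2, ?_, ?_⟩
    · exact Ideal.add_mem _
        (Ideal.span_mono Set.subset_union_left (tag_ideal_mem t hz1))
        (Ideal.span_mono Set.subset_union_right (tag_ideal_mem (1-t) hz2))
    · refine add_mem_coneGen ?_ ?_
      · exact coneGen_map (tagMap t)
          (fun x hx => mem_coneGen_of_mem (Set.mem_union_left _ ⟨x, hx, rfl⟩)) hp1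
      · exact coneGen_map (tagMap (1-t))
          (fun x hx => mem_coneGen_of_mem (Set.mem_union_right _ ⟨x, hx, rfl⟩)) hp2
    · have e : rename (some : σ → Option σ) (z2 + p2) = rename some (z1 + p1) := by
        rw [hsum]
      have h2 : (t * rename some z1 + (1-t) * rename some z2) +
          (t * rename some p1 + (1-t) * rename some p2) =
          t * rename (some : σ → Option σ) (z1+p1) + (1-t) * rename some (z2+p2) := by
        simp only [map_add]; ring
      rw [h2, e]; ring
  · rintro ⟨z, hz, p, hp, hq⟩
    have hzp : z + p = rename (some : σ → Option σ) q := hq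
    -- first evaluation: t ↦ 1
    set φ1 : MvPolynomial (Option σ) ℚ →ₐ[ℚ] MvPolynomial σ ℚ :=
      aeval (fun o : Option σ => o.elim 1 MvPolynomial.X) with hφ1
    set φ2 : MvPolynomial (Option σ) ℚ →ₐ[ℚ] MvPolynomial σ ℚ :=
      aeval (fun o : Option σ => o.elim 0 MvPolynomial.X) with hφ2
    have hr1 : ∀ x : MvPolynomial σ ℚ, φ1 (rename some x) = x := by
      intro x
      rw [hφ1, aeval_rename]
      have h : ((fun o : Option σ => o.elim 1 MvPolynomial.X) ∘ some) =
        (MvPolynomial.X : σ → MvPolynomial σ ℚ) := rfl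
      rw [h]
      simp [aeval_X_left_apply]
    have hr2 : ∀ x : MvPolynomial σ ℚ, φ2 (rename some x) = x := by
      intro x
      rw [hφ2, aeval_rename]
      have h : ((fun o : Option σ => o.elim 0 MvPolynomial.X) ∘ some) =
        (MvPolynomial.X : σ → MvPolynomial σ ℚ) := rfl
      rw [h]
      simp [aeval_X_left_apply]
    constructor
    · have h := untag φ1 hr1 t (1-t) (by simp [hφ1, ht]) (by simp [hφ1, ht]) hz hp
      rw [hzp, hr1] at h
      exact Set.mem_add.1 h
    · rw [Set.union_comm (tag t Z1)] at hz
      rw [Set.union_comm (tag t P1)] at hp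
      have h := untag φ2 hr2 (1-t) t (by simp [hφ2, ht]) (by simp [hφ2, ht]) hz hp
      rw [hzp, hr2] at h
      exact Set.mem_add.1 h
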